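/- Let σ ∈ (0,1), c > 0, and define d(c) as the infimum of S_c(u) over all u ∈ H¹(ℝ;ℂ) \ {0} with K_c(u) = 0, where S_c(u) = L_c(u) - N(u)/(σ+1), K_c(u) = L_c(u) - N(u), L_c(u) = ‖∂_x u‖² + c·Im∫ u conj(∂_x u) + (c²/4)‖u‖², N(u) = Im∫|u|^{2σ} u conj(∂_x u). If f ∈ H¹(ℝ;ℂ) \ {0} satisfies ‖∂_x f‖_{L²}² ≤ ((σ+1)/σ)·d(c), then K_c(e^{i(c/2)x} f) ≥ 0. -/

import Mathlib

open Real MeasureTheory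

def H1 (v : ℝ → ℂ) : Prop :=
  Differentiable ℝ v ∧ MemLp v 2 volume ∧ MemLp (deriv v) 2 volume

noncomputable def Lfun (c : ℝ) (v : ℝ → ℂ) : ℝ :=
  (∫ x : ℝ, ‖deriv v x‖ ^ 2) + c * (∫ x : ℝ, (v x * (starRingEnd ℂ) (deriv v x)).im)
    + (c ^ 2 / 4) * ∫ x : ℝ, ‖v x‖ ^ 2

noncomputable def Nfun (σ : ℝ) (v : ℝ → ℂ) : ℝ :=
  ∫ x : ℝ, ‖v x‖ ^ (2 * σ) * (v x * (starRingEnd ℂ) (deriv v x)).im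

noncomputable def Sfun (σ c : ℝ) (v : ℝ → ℂ) : ℝ :=
  Lfun c v - Nfun σ v / (σ + 1)

noncomputable def Kfun (σ c : ℝ) (v : ℝ → ℂ) : ℝ :=
  Lfun c v - Nfun σ v

/-- the minimization value `d(c)` -/
noncomputable def dmin (σ c : ℝ) : ℝ :=
  sInf {r : ℝ | ∃ u : ℝ → ℂ, H1 u ∧ u ≠ 0 ∧ Kfun σ c u = 0 ∧ Sfun σ c u = r}

noncomputable def gaugeT (c : ℝ) (f : ℝ → ℂ) : ℝ → ℂ :=
  fun x => Complex.exp (Complex.I * ((c / 2) * x : ℝ)) * f x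

/-! ### Auxiliary algebra lemmas -/

lemma normsq_eq (z : ℂ) : ‖z‖^2 = z.re^2 + z.im^2 := by
  rw [Complex.sq_norm, Complex.normSq_apply]; ring

lemma alg1 (z w : ℂ) (t : ℝ) :
    ‖Complex.I*t*z + w‖^2 = t^2*‖z‖^2 + ‖w‖^2 - 2*t*(z * (starRingEnd ℂ) w).im := by
  simp only [Complex.sq_norm]
  simp [Complex.normSq_apply, Complex.mul_im, Complex.mul_re]
  ring

lemma alg2 (z w e : ℂ) (t : ℝ) : (e*z * (starRingEnd ℂ) (e*(Complex.I*t*z + w))).im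
    = Complex.normSq e * (-(t*‖z‖^2) + (z * (starRingEnd ℂ) w).im) := by
  simp only [Complex.sq_norm]
  simp [Complex.normSq_apply, Complex.mul_im, Complex.mul_re, map_add, map_mul]
  ring

lemma alg3 (r s : ℝ) (z w : ℂ) :
    (((r:ℂ)*z) * (starRingEnd ℂ) ((s:ℂ)*w)).im = r*s*(z * (starRingEnd ℂ) w).im := by
  simp [Complex.mul_im, Complex.mul_re, Complex.conj_re, Complex.conj_im]
  ring

lemma exp_norm_one (t : ℝ) : ‖Complex.exp (Complex.I * (t:ℝ))‖ = 1 := by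
  simp [Complex.norm_exp]

lemma exp_normSq_one (t : ℝ) : Complex.normSq (Complex.exp (Complex.I * (t:ℝ))) = 1 := by
  rw [Complex.normSq_eq_norm_sq, exp_norm_one]
  norm_num

/-! ### Derivative of the gauge transform -/

theorem gauge_hasDeriv (c : ℝ) (f : ℝ → ℂ) (hf : Differentiable ℝ f) (x : ℝ) :
    HasDerivAt (gaugeT c f)
      (Complex.exp (Complex.I * ((c / 2) * x : ℝ))
        * (Complex.I * ((c/2 : ℝ) : ℂ) * f x + deriv f x)) x := by
  have h1 : HasDerivAt (fun y : ℝ => ((c / 2) * y : ℝ)) (c/2) x := by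
    simpa using (hasDerivAt_id x).const_mul (c/2)
  have h2 : HasDerivAt (fun y : ℝ => (((c / 2) * y : ℝ) : ℂ)) ((c/2 : ℝ) : ℂ) x := h1.ofReal_comp
  have h3 : HasDerivAt (fun y : ℝ => Complex.I * (((c / 2) * y : ℝ) : ℂ))
      (Complex.I * ((c/2:ℝ):ℂ)) x := h2.const_mul Complex.I
  have h4 := h3.cexp
  have h5 := h4.mul (hf x).hasDerivAt
  refine h5.congr_deriv ?_
  ring

theorem gauge_deriv (c : ℝ) (f : ℝ → ℂ) (hf : Differentiable ℝ f) (x : ℝ) :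
    deriv (gaugeT c f) x = Complex.exp (Complex.I * ((c / 2) * x : ℝ))
        * (Complex.I * ((c/2 : ℝ) : ℂ) * f x + deriv f x) :=
  (gauge_hasDeriv c f hf x).deriv

/-! ### Boundedness of H1 functions -/

theorem H1.bounded {f : ℝ → ℂ} (hf : H1 f) : ∃ M : ℝ, ∀ x, ‖f x‖^2 ≤ M := by
  obtain ⟨hd, hf2, hf'2⟩ := hf
  set φ : ℝ → ℝ := fun x => ‖f x‖^2 with hφ
  set φ' : ℝ → ℝ := fun x => 2*((f x).re*(deriv f x).re + (f x).im*(deriv f x).im) with hφ'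
  have hφd : ∀ x, HasDerivAt φ (φ' x) x := by
    intro x
    have hre : HasDerivAt (fun y => (f y).re) ((deriv f x).re) x :=
      (Complex.reCLM.hasFDerivAt.comp_hasDerivAt x (hd x).hasDerivAt)
    have him : HasDerivAt (fun y => (f y).im) ((deriv f x).im) x :=
      (Complex.imCLM.hasFDerivAt.comp_hasDerivAt x (hd x).hasDerivAt)
    have h := (hre.pow 2).add (him.pow 2)
    have hfun : φ = fun y => (f y).re^2 + (f y).im^2 := funext fun y => normsq_eq _
    rw [hfun]
    refine h.congr_deriv ?_
    ring
  have intφ : Integrable φ := (memLp_two_iff_integrable_sq_norm hf2.1).mp hf2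
  have intf'2 : Integrable (fun x => ‖deriv f x‖^2) :=
    (memLp_two_iff_integrable_sq_norm hf'2.1).mp hf'2
  have hbound : ∀ x, |φ' x| ≤ φ x + ‖deriv f x‖^2 := by
    intro x
    have h1 : φ x = (f x).re^2 + (f x).im^2 := normsq_eq _
    have h2 : ‖deriv f x‖^2 = (deriv f x).re^2 + (deriv f x).im^2 := normsq_eq _
    rw [h1, h2, hφ', abs_le]
    refine ⟨?_, ?_⟩ <;> show _ ≤ _ <;> beta_reduce <;>
      nlinarith [sq_nonneg ((f x).re - (deriv f x).re), sq_nonneg ((f x).re + (deriv f x).re),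
        sq_nonneg ((f x).im - (deriv f x).im), sq_nonneg ((f x).im + (deriv f x).im)]
  have hmeas : AEStronglyMeasurable φ' volume := by
    have h1 : AEStronglyMeasurable (fun x => (f x).re) volume :=
      (Complex.continuous_re.comp hd.continuous).aestronglyMeasurable
    have h2 : AEStronglyMeasurable (fun x => (f x).im) volume :=
      (Complex.continuous_im.comp hd.continuous).aestronglyMeasurable
    have h3 : AEStronglyMeasurable (fun x => (deriv f x).re) volume :=
      Complex.continuous_re.comp_aestronglyMeasurable hf'2.1
    have h4 : AEStronglyMeasurable (fun x => (deriv f x).im) volume :=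
      Complex.continuous_im.comp_aestronglyMeasurable hf'2.1
    exact (((h1.mul h3).add (h2.mul h4)).const_mul 2)
  have intφ' : Integrable φ' := by
    refine (intφ.add intf'2).mono' hmeas ?_
    filter_upwards with x
    simpa [Real.norm_eq_abs] using hbound x
  set C : ℝ := ∫ x, φ x with hC
  set D : ℝ := ∫ x, |φ' x| with hD
  refine ⟨C + 1 + D, fun x => ?_⟩
  have hy : ∃ y ∈ Set.Icc x (x+1), φ y ≤ C + 1 := by
    by_contra h
    push_neg at h
    have h1 : (C + 1) * (volume (Set.Icc x (x+1))).toReal ≤ ∫ y in Set.Icc x (x+1), φ y :=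
      setIntegral_ge_of_const_le_real measurableSet_Icc (by simp) (fun y hy => (h y hy).le)
        intφ.integrableOn
    have h2 : ∫ y in Set.Icc x (x+1), φ y ≤ C :=
      setIntegral_le_integral intφ (Filter.Eventually.of_forall (fun y => by positivity))
    rw [Real.volume_Icc] at h1
    simp only [add_sub_cancel_left, ENNReal.toReal_ofReal zero_le_one, mul_one] at h1
    linarith
  obtain ⟨y, hyIcc, hyle⟩ := hy
  have hftc : ∫ t in x..y, φ' t = φ y - φ x :=
    intervalIntegral.integral_eq_sub_of_hasDerivAt (fun t _ => hφd t)
      intφ'.intervalIntegrable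
  have habs : |∫ t in x..y, φ' t| ≤ D := by
    calc |∫ t in x..y, φ' t| ≤ ∫ t in x..y, |φ' t| :=
          intervalIntegral.abs_integral_le_integral_abs hyIcc.1
      _ = ∫ t in Set.Ioc x y, |φ' t| := intervalIntegral.integral_of_le hyIcc.1
      _ ≤ D := setIntegral_le_integral intφ'.abs
          (Filter.Eventually.of_forall (fun t => abs_nonneg _))
  have heq : φ x = φ y - ∫ t in x..y, φ' t := by linarith [hftc]
  have h3 : φ x ≤ φ y + |∫ t in x..y, φ' t| := by
    rw [heq]; have := neg_abs_le (∫ t in x..y, φ' t); linarith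
  calc φ x ≤ φ y + |∫ t in x..y, φ' t| := h3
    _ ≤ (C+1) + D := add_le_add hyle habs

/-! ### Integrability lemmas -/

lemma integrable_mul_L2 {u v : ℝ → ℝ} (hu : MemLp u 2 volume) (hv : MemLp v 2 volume) :
    Integrable (fun x => u x * v x) := by
  have h : MemLp (u • v) 1 volume := hv.smul hu
  rw [← memLp_one_iff_integrable]
  exact h

section IntLemmas

variable {f : ℝ → ℂ} (hf : H1 f) {σ : ℝ} (hσ : 0 < σ) {K : ℝ}
  (hK : ∀ x, ‖f x‖ ≤ K)

lemma intC (hf : H1 f) : Integrable (fun x => ‖f x‖^2) :=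
  (memLp_two_iff_integrable_sq_norm hf.2.1.1).mp hf.2.1

lemma intD (hf : H1 f) : Integrable (fun x => ‖deriv f x‖^2) :=
  (memLp_two_iff_integrable_sq_norm hf.2.2.1).mp hf.2.2

lemma intFF' (hf : H1 f) : Integrable (fun x => ‖f x‖ * ‖deriv f x‖) :=
  integrable_mul_L2 hf.2.1.norm hf.2.2.norm

lemma aesm_im_mul_conj (hf : H1 f) :
    AEStronglyMeasurable (fun x => (f x * (starRingEnd ℂ) (deriv f x)).im) volume := by
  have h1 : AEStronglyMeasurable f volume := hf.1.continuous.aestronglyMeasurable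
  have h2 : AEStronglyMeasurable (fun x => (starRingEnd ℂ) (deriv f x)) volume :=
    Complex.continuous_conj.comp_aestronglyMeasurable hf.2.2.1
  exact Complex.continuous_im.comp_aestronglyMeasurable (h1.mul h2)

lemma im_mul_conj_bound (z w : ℂ) : |(z * (starRingEnd ℂ) w).im| ≤ ‖z‖ * ‖w‖ := by
  calc |(z * (starRingEnd ℂ) w).im| ≤ ‖z * (starRingEnd ℂ) w‖ := Complex.abs_im_le_norm _
    _ = ‖z‖ * ‖w‖ := by rw [norm_mul, Complex.norm_conj]

lemma intIm (hf : H1 f) :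
    Integrable (fun x => (f x * (starRingEnd ℂ) (deriv f x)).im) := by
  refine (intFF' hf).mono' (aesm_im_mul_conj hf) ?_
  filter_upwards with x
  simpa [Real.norm_eq_abs] using im_mul_conj_bound (f x) (deriv f x)

lemma aesm_rpow (hf : H1 f) (hσ : 0 < σ) :
    AEStronglyMeasurable (fun x => ‖f x‖ ^ (2*σ)) volume := by
  have : Continuous (fun x => ‖f x‖ ^ (2*σ)) :=
    hf.1.continuous.norm.rpow_const (fun x => Or.inr (by linarith))
  exact this.aestronglyMeasurable

lemma rpow_bound (hσ : 0 < σ) (hK : ∀ x, ‖f x‖ ≤ K) (x : ℝ) :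
    ‖f x‖ ^ (2*σ) ≤ (max K 1) ^ (2*σ) :=
  Real.rpow_le_rpow (norm_nonneg _) ((hK x).trans (le_max_left _ _)) (by linarith)

lemma intP (hf : H1 f) (hσ : 0 < σ) (hK : ∀ x, ‖f x‖ ≤ K) :
    Integrable (fun x => ‖f x‖ ^ (2*σ) * (f x * (starRingEnd ℂ) (deriv f x)).im) := by
  refine (((intFF' hf).const_mul ((max K 1) ^ (2*σ)))).mono'
    ((aesm_rpow hf hσ).mul (aesm_im_mul_conj hf)) ?_
  filter_upwards with x
  rw [Real.norm_eq_abs, abs_mul]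
  have h1 : |‖f x‖ ^ (2*σ)| = ‖f x‖ ^ (2*σ) := abs_of_nonneg (Real.rpow_nonneg (norm_nonneg _) _)
  rw [h1]
  have h2 := im_mul_conj_bound (f x) (deriv f x)
  have h3 := rpow_bound hσ hK x
  have h4 : (0:ℝ) ≤ ‖f x‖ ^ (2*σ) := Real.rpow_nonneg (norm_nonneg _) _
  have h5 : (0:ℝ) ≤ ‖f x‖ * ‖deriv f x‖ := by positivity
  calc ‖f x‖ ^ (2*σ) * |(f x * (starRingEnd ℂ) (deriv f x)).im|
      ≤ (max K 1) ^ (2*σ) * (‖f x‖ * ‖deriv f x‖) := by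
        exact mul_le_mul h3 h2 (abs_nonneg _)
          (Real.rpow_nonneg (le_trans zero_le_one (le_max_right K 1)) _)
    _ = (max K 1) ^ (2*σ) * (‖f x‖ * ‖deriv f x‖) := rfl

lemma intQ (hf : H1 f) (hσ : 0 < σ) (hK : ∀ x, ‖f x‖ ≤ K) :
    Integrable (fun x => ‖f x‖ ^ (2*σ) * ‖f x‖^2) := by
  refine (((intC hf).const_mul ((max K 1) ^ (2*σ)))).mono'
    ((aesm_rpow hf hσ).mul (hf.1.continuous.norm.pow 2).aestronglyMeasurable) ?_
  filter_upwards with x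
  rw [Real.norm_eq_abs, abs_mul]
  have h1 : |‖f x‖ ^ (2*σ)| = ‖f x‖ ^ (2*σ) := abs_of_nonneg (Real.rpow_nonneg (norm_nonneg _) _)
  rw [h1, abs_of_nonneg (by positivity : (0:ℝ) ≤ ‖f x‖^2)]
  exact mul_le_mul_of_nonneg_right (rpow_bound hσ hK x) (by positivity)

end IntLemmas

/-! ### Gauge transform computations -/

section Gauge

variable {c σ : ℝ} {h : ℝ → ℂ}

lemma gauge_norm (c : ℝ) (h : ℝ → ℂ) (x : ℝ) : ‖gaugeT c h x‖ = ‖h x‖ := by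
  rw [gaugeT, norm_mul, exp_norm_one, one_mul]

lemma gauge_deriv_normsq (hh : Differentiable ℝ h) (x : ℝ) :
    ‖deriv (gaugeT c h) x‖^2
      = (c^2/4)*‖h x‖^2 + ‖deriv h x‖^2 - c*(h x * (starRingEnd ℂ) (deriv h x)).im := by
  rw [gauge_deriv c h hh x, norm_mul, exp_norm_one, one_mul, alg1]
  ring

lemma gauge_im_mul_conj (hh : Differentiable ℝ h) (x : ℝ) :
    (gaugeT c h x * (starRingEnd ℂ) (deriv (gaugeT c h) x)).im
      = -((c/2)*‖h x‖^2) + (h x * (starRingEnd ℂ) (deriv h x)).im := by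
  rw [gauge_deriv c h hh x, gaugeT]
  rw [alg2, exp_normSq_one, one_mul]

lemma L_gauge (hh : H1 h) : Lfun c (gaugeT c h) = ∫ x : ℝ, ‖deriv h x‖^2 := by
  have e1 : ∫ x : ℝ, ‖deriv (gaugeT c h) x‖^2
      = (c^2/4) * (∫ x : ℝ, ‖h x‖^2) + (∫ x : ℝ, ‖deriv h x‖^2)
        - c * ∫ x : ℝ, (h x * (starRingEnd ℂ) (deriv h x)).im := by
    have e0 : (∫ x : ℝ, ‖deriv (gaugeT c h) x‖^2)
        = ∫ x : ℝ, ((c^2/4)*‖h x‖^2 + ‖deriv h x‖^2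
            - c*(h x * (starRingEnd ℂ) (deriv h x)).im) :=
      integral_congr_ae (Filter.Eventually.of_forall fun x => gauge_deriv_normsq hh.1 x)
    have hA : Integrable (fun x : ℝ => c^2/4*‖h x‖^2 + ‖deriv h x‖^2) :=
      ((intC hh).const_mul _).add (intD hh)
    rw [e0, integral_sub hA ((intIm hh).const_mul c),
      integral_add ((intC hh).const_mul _) (intD hh), integral_const_mul, integral_const_mul]
  have e2 : ∫ x : ℝ, (gaugeT c h x * (starRingEnd ℂ) (deriv (gaugeT c h) x)).im
      = -((c/2) * (∫ x : ℝ, ‖h x‖^2)) + ∫ x : ℝ, (h x * (starRingEnd ℂ) (deriv h x)).im := by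
    have e0 : (∫ x : ℝ, (gaugeT c h x * (starRingEnd ℂ) (deriv (gaugeT c h) x)).im)
        = ∫ x : ℝ, (-((c/2)*‖h x‖^2) + (h x * (starRingEnd ℂ) (deriv h x)).im) :=
      integral_congr_ae (Filter.Eventually.of_forall fun x => gauge_im_mul_conj hh.1 x)
    rw [e0, integral_add (((intC hh).const_mul (c/2)).neg') (intIm hh), integral_neg,
      integral_const_mul]
  have e3 : ∫ x : ℝ, ‖gaugeT c h x‖^2 = ∫ x : ℝ, ‖h x‖^2 :=
    integral_congr_ae (Filter.Eventually.of_forall fun x =>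
      show ‖gaugeT c h x‖^2 = ‖h x‖^2 by rw [gauge_norm])
  rw [Lfun, e1, e2, e3]
  ring

lemma N_gauge (hh : H1 h) (hσ : 0 < σ) {K : ℝ} (hK : ∀ x, ‖h x‖ ≤ K) :
    Nfun σ (gaugeT c h) = (∫ x : ℝ, ‖h x‖ ^ (2*σ) * (h x * (starRingEnd ℂ) (deriv h x)).im)
      - (c/2) * ∫ x : ℝ, ‖h x‖ ^ (2*σ) * ‖h x‖^2 := by
  have e0 : Nfun σ (gaugeT c h)
      = ∫ x : ℝ, (‖h x‖ ^ (2*σ) * (h x * (starRingEnd ℂ) (deriv h x)).im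
          - (c/2) * (‖h x‖ ^ (2*σ) * ‖h x‖^2)) := by
    refine integral_congr_ae (Filter.Eventually.of_forall fun x => ?_)
    show ‖gaugeT c h x‖ ^ (2*σ) * (gaugeT c h x * (starRingEnd ℂ) (deriv (gaugeT c h) x)).im = _
    rw [gauge_norm, gauge_im_mul_conj hh.1]
    ring
  rw [e0, integral_sub (intP hh hσ hK) ((intQ hh hσ hK).const_mul (c/2)), integral_const_mul]

lemma H1_gauge (hh : H1 h) : H1 (gaugeT c h) := by
  refine ⟨fun x => (gauge_hasDeriv c h hh.1 x).differentiableAt, ?_, ?_⟩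
  · have hcont : Continuous (gaugeT c h) := by
      apply Continuous.mul ?_ hh.1.continuous
      apply Complex.continuous_exp.comp
      exact continuous_const.mul (Complex.continuous_ofReal.comp
        (continuous_const.mul continuous_id))
    rw [memLp_two_iff_integrable_sq_norm hcont.aestronglyMeasurable]
    refine (intC hh).congr ?_
    filter_upwards with x
    rw [gauge_norm]
  · have hmeas : AEStronglyMeasurable (deriv (gaugeT c h)) volume := by
      have : deriv (gaugeT c h) = fun x => Complex.exp (Complex.I * ((c / 2) * x : ℝ))
          * (Complex.I * ((c/2 : ℝ) : ℂ) * h x + deriv h x) :=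
        funext fun x => gauge_deriv c h hh.1 x
      rw [this]
      have hE : Continuous (fun x : ℝ => Complex.exp (Complex.I * ((c / 2) * x : ℝ))) := by
        apply Complex.continuous_exp.comp
        exact continuous_const.mul (Complex.continuous_ofReal.comp
          (continuous_const.mul continuous_id))
      exact hE.aestronglyMeasurable.mul
        (((continuous_const.mul hh.1.continuous).aestronglyMeasurable).add hh.2.2.1)
    rw [memLp_two_iff_integrable_sq_norm hmeas]
    refine ((((intC hh).const_mul (c^2/4)).add (intD hh)).sub ((intIm hh).const_mul c)).congr ?_
    filter_upwards with x
    exact (gauge_deriv_normsq hh.1 x).symm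

lemma K_gauge (hh : H1 h) (hσ : 0 < σ) {K : ℝ} (hK : ∀ x, ‖h x‖ ≤ K) :
    Kfun σ c (gaugeT c h) = (∫ x : ℝ, ‖deriv h x‖^2)
      + (c/2) * (∫ x : ℝ, ‖h x‖ ^ (2*σ) * ‖h x‖^2)
      - ∫ x : ℝ, ‖h x‖ ^ (2*σ) * (h x * (starRingEnd ℂ) (deriv h x)).im := by
  rw [Kfun, L_gauge hh, N_gauge hh hσ hK]
  ring

lemma S_gauge (hh : H1 h) (hσ : 0 < σ) {K : ℝ} (hK : ∀ x, ‖h x‖ ≤ K) :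
    Sfun σ c (gaugeT c h) = (∫ x : ℝ, ‖deriv h x‖^2)
      - ((∫ x : ℝ, ‖h x‖ ^ (2*σ) * (h x * (starRingEnd ℂ) (deriv h x)).im)
        - (c/2) * ∫ x : ℝ, ‖h x‖ ^ (2*σ) * ‖h x‖^2) / (σ + 1) := by
  rw [Sfun, L_gauge hh, N_gauge hh hσ hK]

end Gauge

/-! ### Lower bound for the minimization set -/

lemma Lfun_nonneg {c : ℝ} {u : ℝ → ℂ} (hu : H1 u) : 0 ≤ Lfun c u := by
  have key : Lfun c u = ∫ x : ℝ, ‖Complex.I*(-(c/2):ℝ)*u x + deriv u x‖^2 := by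
    have : ∀ x : ℝ, ‖Complex.I*(-(c/2):ℝ)*u x + deriv u x‖^2
        = (c^2/4)*‖u x‖^2 + ‖deriv u x‖^2 + c*(u x * (starRingEnd ℂ) (deriv u x)).im := by
      intro x; rw [alg1]; ring
    have hA : Integrable (fun x : ℝ => c^2/4*‖u x‖^2 + ‖deriv u x‖^2) :=
      ((intC hu).const_mul _).add (intD hu)
    rw [integral_congr_ae (Filter.Eventually.of_forall this),
      integral_add hA ((intIm hu).const_mul c),
      integral_add ((intC hu).const_mul _) (intD hu), Lfun,
      integral_const_mul, integral_const_mul]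
    ring
  rw [key]
  exact integral_nonneg fun x => by positivity

lemma dmin_set_nonneg {σ c : ℝ} (hσ : 0 < σ) :
    ∀ r ∈ {r : ℝ | ∃ u : ℝ → ℂ, H1 u ∧ u ≠ 0 ∧ Kfun σ c u = 0 ∧ Sfun σ c u = r}, 0 ≤ r := by
  rintro r ⟨u, hu, -, hK, rfl⟩
  have hN : Nfun σ u = Lfun c u := by
    have := hK; rw [Kfun] at this; linarith
  rw [Sfun, hN]
  have hL := Lfun_nonneg (c := c) hu
  have h1 : Lfun c u - Lfun c u / (σ + 1) = Lfun c u * (σ / (σ + 1)) := by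
    field_simp
    ring
  rw [h1]
  positivity

/-! ### Scaling -/

section Scaling

variable {f : ℝ → ℂ} {γ : ℝ}

/-- the rescaled function -/
noncomputable def scaleF (σ γ : ℝ) (f : ℝ → ℂ) : ℝ → ℂ :=
  fun x => ((γ ^ (1/σ) : ℝ) : ℂ) * f (γ * x)

lemma scaleF_hasDeriv (hf : Differentiable ℝ f) (σ : ℝ) (γ : ℝ) (x : ℝ) :
    HasDerivAt (scaleF σ γ f) (((γ ^ (1/σ) * γ : ℝ) : ℂ) * deriv f (γ * x)) x := by
  have h1 : HasDerivAt (fun y : ℝ => γ * y) γ x := by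
    simpa using (hasDerivAt_id x).const_mul γ
  have h2 : HasDerivAt (fun y : ℝ => f (γ * y)) (γ • deriv f (γ * x)) x :=
    (hf (γ * x)).hasDerivAt.scomp x h1
  have h3 := h2.const_mul ((γ ^ (1/σ) : ℝ) : ℂ)
  refine h3.congr_deriv ?_
  simp only [Complex.real_smul, Complex.ofReal_mul]
  ring

lemma scaleF_deriv (hf : Differentiable ℝ f) (σ : ℝ) (γ : ℝ) (x : ℝ) :
    deriv (scaleF σ γ f) x = ((γ ^ (1/σ) * γ : ℝ) : ℂ) * deriv f (γ * x) :=
  (scaleF_hasDeriv hf σ γ x).deriv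

lemma aesm_comp_mul_left {E : Type*} [TopologicalSpace E] {g : ℝ → E}
    (hg : AEStronglyMeasurable g volume) (hγ : γ ≠ 0) :
    AEStronglyMeasurable (fun x => g (γ * x)) volume := by
  refine hg.comp_quasiMeasurePreserving ⟨measurable_const_mul γ, ?_⟩
  rw [Real.map_volume_mul_left hγ]
  exact Measure.smul_absolutelyContinuous

lemma H1_scaleF (hf : H1 f) (σ : ℝ) (hγ : 0 < γ) : H1 (scaleF σ γ f) := by
  have hd : Differentiable ℝ (scaleF σ γ f) :=
    fun x => (scaleF_hasDeriv hf.1 σ γ x).differentiableAt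
  refine ⟨hd, ?_, ?_⟩
  · have hcont : Continuous (scaleF σ γ f) := hd.continuous
    rw [memLp_two_iff_integrable_sq_norm hcont.aestronglyMeasurable]
    have : Integrable (fun x => (γ ^ (1/σ))^2 * ‖f (γ * x)‖^2) :=
      (((intC hf).comp_mul_left' hγ.ne').const_mul _)
    refine this.congr ?_
    filter_upwards with x
    have hnorm : ‖scaleF σ γ f x‖ = γ^(1/σ) * ‖f (γ*x)‖ := by
      rw [scaleF, norm_mul]
      congr 1
      rw [Complex.norm_real, Real.norm_eq_abs]
      exact abs_of_nonneg (by positivity)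
    rw [hnorm]; ring
  · have hmeas : AEStronglyMeasurable (deriv (scaleF σ γ f)) volume := by
      have heq : deriv (scaleF σ γ f)
          = fun x => ((γ ^ (1/σ) * γ : ℝ) : ℂ) * deriv f (γ * x) :=
        funext fun x => scaleF_deriv hf.1 σ γ x
      rw [heq]
      exact (aesm_comp_mul_left hf.2.2.1 hγ.ne').const_mul _
    rw [memLp_two_iff_integrable_sq_norm hmeas]
    have : Integrable (fun x => (γ ^ (1/σ) * γ)^2 * ‖deriv f (γ * x)‖^2) :=
      (((intD hf).comp_mul_left' hγ.ne').const_mul _)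
    refine this.congr ?_
    filter_upwards with x
    have hnorm : ‖deriv (scaleF σ γ f) x‖ = (γ^(1/σ) * γ) * ‖deriv f (γ*x)‖ := by
      rw [scaleF_deriv hf.1 σ γ x, norm_mul]
      congr 1
      rw [Complex.norm_real, Real.norm_eq_abs]
      exact abs_of_nonneg (by positivity)
    rw [hnorm]; ring

end Scaling

/-! ### The main theorem -/

set_option maxHeartbeats 1000000

theorem K_nonneg_of_small_gradient (σ c : ℝ) (hσ : 0 < σ) (hσ1 : σ < 1) (hc : 0 < c)
    (f : ℝ → ℂ) (hf : H1 f) (hf0 : f ≠ 0)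
    (hgrad : (∫ x : ℝ, ‖deriv f x‖ ^ 2) ≤ ((σ + 1) / σ) * dmin σ c) :
    0 ≤ Kfun σ c (gaugeT c f) := by
  by_contra hcon
  push_neg at hcon
  -- boundedness of f
  obtain ⟨M, hM⟩ := hf.bounded
  set K : ℝ := max M 1 with hKdef
  have hK1 : (1:ℝ) ≤ K := le_max_right _ _
  have hK : ∀ x, ‖f x‖ ≤ K := by
    intro x
    by_contra hx
    push_neg at hx
    have h1 : K < ‖f x‖ := hx
    have h2 : ‖f x‖ ≤ ‖f x‖^2 := le_self_pow₀ (le_trans hK1 h1.le) two_ne_zero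
    have := hM x
    have hMK : M ≤ K := le_max_left _ _
    linarith
  -- notation
  set D : ℝ := ∫ x : ℝ, ‖deriv f x‖^2 with hD
  set CB : ℝ := ∫ x : ℝ, ‖f x‖ ^ (2*σ) * ‖f x‖^2 with hCB
  set PA : ℝ := ∫ x : ℝ, ‖f x‖ ^ (2*σ) * (f x * (starRingEnd ℂ) (deriv f x)).im with hPA
  have hD0 : 0 ≤ D := integral_nonneg fun x => by positivity
  have hCB0 : 0 ≤ CB := integral_nonneg fun x => by positivity
  -- K(gauge f) < 0 gives W < PA
  have hKf : Kfun σ c (gaugeT c f) = D + (c/2)*CB - PA := K_gauge hf hσ hK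
  set W : ℝ := D + (c/2)*CB with hW
  have hWPA : W < PA := by rw [hKf] at hcon; linarith
  have hW0 : 0 ≤ W := by positivity
  -- D > 0 (else PA = 0)
  have hD_pos : 0 < D := by
    rcases lt_or_eq_of_le hD0 with h | h
    · exact h
    · exfalso
      have hD_eq : D = 0 := h.symm
      have hae : (fun x => ‖deriv f x‖^2) =ᵐ[volume] 0 :=
        (integral_eq_zero_iff_of_nonneg_ae
          (Filter.Eventually.of_forall (fun x => by positivity)) (intD hf)).mp
          (by rw [← hD]; exact hD_eq)
      have hae' : (deriv f) =ᵐ[volume] 0 := by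
        filter_upwards [hae] with x hx
        have : ‖deriv f x‖^2 = 0 := hx
        have : ‖deriv f x‖ = 0 := by nlinarith [norm_nonneg (deriv f x)]
        simpa using this
      have hPA0 : PA = 0 := by
        rw [hPA]
        rw [show (0:ℝ) = ∫ _ : ℝ, (0:ℝ) from (integral_zero ℝ ℝ).symm]
        refine integral_congr_ae ?_
        filter_upwards [hae'] with x hx
        rw [hx]
        simp
      have : 0 < PA := lt_of_le_of_lt hW0 hWPA
      linarith
  have hPA_pos : 0 < PA := lt_of_le_of_lt hW0 hWPA
  have hW_pos : 0 < W := by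
    have : 0 < D + (c/2)*CB := by positivity
    rwa [hW]
  -- define γ₀
  set γ : ℝ := W / PA with hγdef
  have hγ_pos : 0 < γ := div_pos hW_pos hPA_pos
  have hγ_lt1 : γ < 1 := (div_lt_one hPA_pos).mpr hWPA
  set a : ℝ := γ ^ (1/σ) with hadef
  have ha_pos : 0 < a := Real.rpow_pos_of_pos hγ_pos _
  have ha_lt1 : a < 1 := Real.rpow_lt_one hγ_pos.le hγ_lt1 (by positivity)
  -- a ^ (2σ) = γ ^ 2
  have ha2σ : a ^ (2*σ) = γ^2 := by
    have h2 : (1/σ) * (2*σ) = 2 := by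
      field_simp
    have h3 : a ^ (2*σ) = γ ^ ((1/σ) * (2*σ)) := by
      rw [hadef, Real.rpow_mul hγ_pos.le]
    rw [h3, h2, show (2:ℝ) = ((2:ℕ):ℝ) by norm_num, Real.rpow_natCast]
  -- the rescaled function
  set g : ℝ → ℂ := scaleF σ γ f with hg
  have hg1 : H1 g := H1_scaleF hf σ hγ_pos
  have hgK : ∀ x, ‖g x‖ ≤ a * K := by
    intro x
    rw [hg, scaleF, norm_mul, Complex.norm_real, Real.norm_eq_abs, abs_of_nonneg ha_pos.le]
    exact mul_le_mul_of_nonneg_left (hK _) ha_pos.le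
  have habs_inv : |γ⁻¹| = γ⁻¹ := abs_of_nonneg (by positivity)
  -- scaled integrals
  have hnorm_g : ∀ x, ‖g x‖ = a * ‖f (γ*x)‖ := by
    intro x
    rw [hg, scaleF, norm_mul, Complex.norm_real, Real.norm_eq_abs, abs_of_nonneg ha_pos.le]
  have hderiv_g : ∀ x, deriv g x = ((a * γ : ℝ) : ℂ) * deriv f (γ * x) :=
    fun x => scaleF_deriv hf.1 σ γ x
  have I1 : (∫ x : ℝ, ‖deriv g x‖^2) = a^2 * γ * D := by
    have e : ∀ x : ℝ, ‖deriv g x‖^2 = (a*γ)^2 * ‖deriv f (γ*x)‖^2 := by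
      intro x
      rw [hderiv_g x, norm_mul, Complex.norm_real, Real.norm_eq_abs, mul_pow,
        abs_of_nonneg (by positivity : (0:ℝ) ≤ a*γ)]
    rw [integral_congr_ae (Filter.Eventually.of_forall e), integral_const_mul,
      MeasureTheory.Measure.integral_comp_mul_left (fun y => ‖deriv f y‖^2) γ,
      habs_inv, smul_eq_mul, ← hD]
    field_simp
  have I2 : (∫ x : ℝ, ‖g x‖ ^ (2*σ) * ‖g x‖^2) = a^2 * γ * CB := by
    have e : ∀ x : ℝ, ‖g x‖ ^ (2*σ) * ‖g x‖^2
        = γ^2 * a^2 * (‖f (γ*x)‖ ^ (2*σ) * ‖f (γ*x)‖^2) := by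
      intro x
      rw [hnorm_g x, Real.mul_rpow ha_pos.le (norm_nonneg _), ha2σ, mul_pow]
      ring
    rw [integral_congr_ae (Filter.Eventually.of_forall e), integral_const_mul,
      MeasureTheory.Measure.integral_comp_mul_left
        (fun y => ‖f y‖ ^ (2*σ) * ‖f y‖^2) γ, habs_inv, smul_eq_mul, ← hCB]
    field_simp
  have I3 : (∫ x : ℝ, ‖g x‖ ^ (2*σ) * (g x * (starRingEnd ℂ) (deriv g x)).im)
      = a^2 * γ^2 * PA := by
    have e : ∀ x : ℝ, ‖g x‖ ^ (2*σ) * (g x * (starRingEnd ℂ) (deriv g x)).im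
        = γ^2 * (a^2*γ) * (‖f (γ*x)‖ ^ (2*σ)
            * (f (γ*x) * (starRingEnd ℂ) (deriv f (γ*x))).im) := by
      intro x
      rw [hnorm_g x, Real.mul_rpow ha_pos.le (norm_nonneg _), ha2σ, hderiv_g x]
      rw [hg, scaleF, alg3]
      ring
    rw [integral_congr_ae (Filter.Eventually.of_forall e), integral_const_mul,
      MeasureTheory.Measure.integral_comp_mul_left
        (fun y => ‖f y‖ ^ (2*σ) * (f y * (starRingEnd ℂ) (deriv f y)).im) γ,
      habs_inv, smul_eq_mul, ← hPA]
    field_simp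
  -- K of the gauged rescaled function vanishes
  have hKg : Kfun σ c (gaugeT c g) = 0 := by
    rw [K_gauge hg1 hσ hgK, I1, I2, I3]
    have hPAW : γ * PA = W := by
      rw [hγdef]; field_simp
    have : a^2*γ*D + c/2*(a^2*γ*CB) - a^2*γ^2*PA = a^2*γ*(D + (c/2)*CB - γ*PA) := by ring
    rw [this, hPAW, ← hW]
    ring
  -- S of the gauged rescaled function
  have hSg : Sfun σ c (gaugeT c g) = (σ/(σ+1)) * (a^2*γ*D) := by
    rw [S_gauge hg1 hσ hgK, I1, I2, I3]
    have hPAW : γ * PA = W := by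
      rw [hγdef]; field_simp
    have hNL : a^2*γ^2*PA - c/2*(a^2*γ*CB) = a^2*γ*D := by
      have : a^2*γ^2*PA - c/2*(a^2*γ*CB) = a^2*γ*((γ*PA) - (c/2)*CB) := by ring
      rw [this, hPAW, hW]
      ring
    rw [hNL]
    field_simp
    ring
  -- the gauged rescaled function is admissible
  have hgne : gaugeT c g ≠ 0 := by
    obtain ⟨x₀, hx₀⟩ := Function.ne_iff.mp hf0
    intro hcontra
    have := congrFun hcontra (x₀ / γ)
    rw [gaugeT] at this
    simp only [Pi.zero_apply, mul_eq_zero] at this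
    rcases this with h | h
    · exact Complex.exp_ne_zero _ h
    · rw [hg, scaleF, mul_div_cancel₀ _ hγ_pos.ne'] at h
      rcases mul_eq_zero.mp h with h' | h'
      · rw [Complex.ofReal_eq_zero] at h'
        exact ha_pos.ne' h'
      · exact hx₀ h'
  have hmem : Sfun σ c (gaugeT c g)
      ∈ {r : ℝ | ∃ u : ℝ → ℂ, H1 u ∧ u ≠ 0 ∧ Kfun σ c u = 0 ∧ Sfun σ c u = r} :=
    ⟨gaugeT c g, H1_gauge hg1, hgne, hKg, rfl⟩
  have hdle : dmin σ c ≤ Sfun σ c (gaugeT c g) :=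
    csInf_le ⟨0, fun r hr => dmin_set_nonneg hσ r hr⟩ hmem
  -- contradiction
  have hfinal : D ≤ a^2*γ*D := by
    have h1 : ((σ + 1) / σ) * dmin σ c ≤ ((σ + 1) / σ) * Sfun σ c (gaugeT c g) :=
      mul_le_mul_of_nonneg_left hdle (by positivity)
    have h2 : ((σ + 1) / σ) * Sfun σ c (gaugeT c g) = a^2*γ*D := by
      rw [hSg]
      field_simp
    calc D ≤ ((σ + 1) / σ) * dmin σ c := hgrad
      _ ≤ ((σ + 1) / σ) * Sfun σ c (gaugeT c g) := h1
      _ = a^2*γ*D := h2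
  have : a^2*γ*D < D := by
    have h1 : a^2*γ < 1 := by
      have ha2 : a^2 ≤ 1 := by nlinarith
      calc a^2*γ ≤ 1*γ := mul_le_mul_of_nonneg_right ha2 hγ_pos.le
        _ = γ := one_mul γ
        _ < 1 := hγ_lt1
    calc a^2*γ*D < 1*D := by exact mul_lt_mul_of_pos_right h1 hD_pos
      _ = D := one_mul D
  linarith
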